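/- (Negativity of the energy of the plateau function.) Let N ≥ 2, λ > 0, and let f : ℝ → ℝ be continuous with primitive F(u) := ∫₀ᵘ f(s) ds, and suppose there exists γ > 0 with F(γ) > 0. For ρ > 2γ define ω_ρ : [0,ρ] → ℝ by ω_ρ(r) = γ on [0, ρ−2γ] and ω_ρ(r) = (ρ−r)/2 on [ρ−2γ, ρ]. Then ω_ρ is 1-Lipschitz with ω_ρ(ρ) = 0, and there exists ρ₀ > 2γ such that for all ρ > ρ₀: J(λ, ω_ρ) := ∫₀^ρ r^{N−1}(1−√(1−ω_ρ'(r)²)) dr − λ∫₀^ρ r^{N−1} F(ω_ρ(r)) dr < 0. -/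

import Mathlib

open Set Filter MeasureTheory intervalIntegral Finset

/-- The plateau function `ω_ρ`: equal to `γ` on `[0, ρ-2γ]` and to `(ρ-r)/2` on `[ρ-2γ, ρ]`. -/
noncomputable def plateau (γ ρ : ℝ) : ℝ → ℝ :=
  fun r => if r ≤ ρ - 2 * γ then γ else (ρ - r) / 2

lemma plateau_eq_min (γ ρ : ℝ) : plateau γ ρ = fun r => min γ ((ρ - r) / 2) := by
  funext r
  unfold plateau
  rcases le_or_gt r (ρ - 2 * γ) with h | h
  · rw [if_pos h, min_eq_left (by linarith)]
  · rw [if_neg (not_le.2 h), min_eq_right (by linarith)]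

lemma plateau_cont (γ ρ : ℝ) : Continuous (plateau γ ρ) := by
  rw [plateau_eq_min]; fun_prop

lemma plateau_lip (γ ρ : ℝ) : LipschitzWith 1 (plateau γ ρ) := by
  rw [plateau_eq_min]
  apply LipschitzWith.of_dist_le_mul
  intro x y
  rw [Real.dist_eq, Real.dist_eq]
  simp only [NNReal.coe_one, one_mul]
  calc |min γ ((ρ - x) / 2) - min γ ((ρ - y) / 2)|
      ≤ max |γ - γ| |(ρ - x) / 2 - (ρ - y) / 2| := abs_min_sub_min_le_max _ _ _ _
    _ ≤ |x - y| := by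
        rw [sub_self, abs_zero]
        apply max_le (abs_nonneg _)
        have h1 : (ρ - x) / 2 - (ρ - y) / 2 = (y - x) / 2 := by ring
        rw [h1, abs_div, abs_sub_comm]
        have h2 : |(2:ℝ)| = 2 := by norm_num
        rw [h2]
        linarith [abs_nonneg (x - y)]

lemma pow_sub_pow_le_aux {x y : ℝ} (hy : 0 ≤ y) (hxy : y ≤ x) (n : ℕ) :
    x ^ n - y ^ n ≤ n * x ^ (n - 1) * (x - y) := by
  rw [← geom_sum₂_mul x y n]
  have hx : 0 ≤ x := hy.trans hxy
  have hsum : (∑ i ∈ Finset.range n, x ^ i * y ^ (n - 1 - i)) ≤ n * x ^ (n - 1) := by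
    calc (∑ i ∈ Finset.range n, x ^ i * y ^ (n - 1 - i))
        ≤ ∑ _i ∈ Finset.range n, x ^ (n - 1) := by
          apply Finset.sum_le_sum
          intro i hi
          calc x ^ i * y ^ (n - 1 - i) ≤ x ^ i * x ^ (n - 1 - i) := by
                apply mul_le_mul_of_nonneg_left (pow_le_pow_left₀ hy hxy _) (by positivity)
            _ = x ^ (i + (n - 1 - i)) := (pow_add x _ _).symm
            _ = x ^ (n - 1) := by
                congr 1
                have := Finset.mem_range.1 hi
                omega
      _ = n * x ^ (n - 1) := by
          rw [Finset.sum_const, Finset.card_range, nsmul_eq_mul]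
  exact mul_le_mul_of_nonneg_right hsum (by linarith)

lemma deriv_plateau_lt (γ ρ : ℝ) {r : ℝ} (h : r < ρ - 2 * γ) :
    deriv (plateau γ ρ) r = 0 := by
  have he : plateau γ ρ =ᶠ[nhds r] fun _ => γ := by
    filter_upwards [Iio_mem_nhds h] with x hx
    simp [plateau, le_of_lt (mem_Iio.mp hx)]
  rw [he.deriv_eq, deriv_const]

lemma deriv_plateau_gt (γ ρ : ℝ) {r : ℝ} (h : ρ - 2 * γ < r) :
    deriv (plateau γ ρ) r = -1 / 2 := by
  have he : plateau γ ρ =ᶠ[nhds r] fun x => (ρ - x) / 2 := by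
    filter_upwards [Ioi_mem_nhds h] with x hx
    simp [plateau, not_le.2 (mem_Ioi.mp hx)]
  rw [he.deriv_eq]
  have h2 : HasDerivAt (fun x : ℝ => (ρ - x) / 2) (-1 / 2) r := by
    simpa using ((hasDerivAt_id r).const_sub ρ).div_const 2
  exact h2.deriv


/-- negativity of the energy of the plateau function: if `F(γ) > 0` for some
`γ > 0`, then `ω_ρ ∈ K_ρ` and `J(λ, ω_ρ) < 0` for all sufficiently large `ρ`. -/
theorem plateau_energy_negative
    (N : ℕ) (hN : 2 ≤ N) (lam : ℝ) (hlam : 0 < lam)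
    (f : ℝ → ℝ) (hf : Continuous f)
    (γ : ℝ) (hγ : 0 < γ) (hFγ : 0 < ∫ s in (0:ℝ)..γ, f s) :
    (∀ ρ, 2 * γ < ρ →
      LipschitzOnWith 1 (plateau γ ρ) (Set.Icc 0 ρ) ∧ plateau γ ρ ρ = 0) ∧
    ∃ ρ₀ > 2 * γ, ∀ ρ > ρ₀,
      (∫ r in (0:ℝ)..ρ, r ^ (N - 1) * (1 - Real.sqrt (1 - (deriv (plateau γ ρ) r) ^ 2))) -
        lam * ∫ r in (0:ℝ)..ρ, r ^ (N - 1) * ∫ s in (0:ℝ)..(plateau γ ρ r), f s < 0 := by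
  constructor
  · intro ρ hρ
    refine ⟨(plateau_lip γ ρ).lipschitzOnWith, ?_⟩
    unfold plateau
    rw [if_neg (by intro h; linarith)]
    ring
  set F : ℝ → ℝ := fun u => ∫ s in (0:ℝ)..u, f s with hFdef
  have hFcont : Continuous F :=
    intervalIntegral.continuous_primitive (fun a b => hf.intervalIntegrable a b) 0
  obtain ⟨M, hM⟩ := (isCompact_Icc : IsCompact (Icc (0:ℝ) γ)).exists_bound_of_continuousOn
    hFcont.continuousOn
  have hM0 : 0 ≤ M := le_trans (norm_nonneg _) (hM 0 ⟨le_refl _, hγ.le⟩)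
  set c : ℝ := 1 - Real.sqrt (1 - (-1 / 2 : ℝ) ^ 2) with hc_def
  have hc1 : c ≤ 1 := by
    have := Real.sqrt_nonneg (1 - (-1 / 2 : ℝ) ^ 2); rw [hc_def]; linarith
  have hNN : N - 1 + 1 = N := by omega
  have hNcast : ((N - 1 : ℕ) : ℝ) + 1 = (N : ℝ) := by
    exact_mod_cast congrArg (Nat.cast (R := ℝ)) hNN
  have hNpos : (0:ℝ) < N := by positivity
  refine ⟨max (4 * γ) (2 ^ (N + 1) * (1 + lam * M) * N * γ / (lam * F γ)),
    lt_of_lt_of_le (by linarith) (le_max_left _ _), ?_⟩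
  intro ρ hρ
  have h4γ : 4 * γ < ρ := lt_of_le_of_lt (le_max_left _ _) hρ
  set a : ℝ := ρ - 2 * γ with ha
  have ha0 : 0 < a := by rw [ha]; linarith
  have haρ : a < ρ := by rw [ha]; linarith
  have hρ0 : 0 < ρ := by linarith
  -- first integral
  set g : ℝ → ℝ := fun x => if x ≤ a then 0 else c * x ^ (N - 1) with hg_def
  have hcont' : Continuous (fun x : ℝ => c * x ^ (N - 1)) := by fun_prop
  have hgmeas : Measurable g := Measurable.ite measurableSet_Iic measurable_const (by fun_prop)
  have hgint : ∀ A B : ℝ, IntervalIntegrable g volume A B := by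
    intro A B
    apply (hcont'.intervalIntegrable A B).mono_fun hgmeas.aestronglyMeasurable
    apply Filter.Eventually.of_forall
    intro x
    by_cases hxa : x ≤ a
    · simp [hg_def, hxa]
      positivity
    · simp [hg_def, hxa]
  have key1 : (∫ r in (0:ℝ)..ρ, r ^ (N - 1) * (1 - Real.sqrt (1 - (deriv (plateau γ ρ) r) ^ 2)))
      = c * ((ρ ^ N - a ^ N) / N) := by
    have hstep : (∫ r in (0:ℝ)..ρ, r ^ (N - 1) * (1 - Real.sqrt (1 - (deriv (plateau γ ρ) r) ^ 2)))
        = ∫ r in (0:ℝ)..ρ, g r := by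
      apply intervalIntegral.integral_congr_ae
      have hae : ∀ᵐ x : ℝ, x ≠ a := by
        rw [MeasureTheory.ae_iff]
        have hset : {x : ℝ | ¬ x ≠ a} = {a} := by ext x; simp
        rw [hset]
        exact Real.volume_singleton
      filter_upwards [hae] with x hx _
      rcases lt_or_gt_of_ne hx with h | h
      · have h' : x < ρ - 2 * γ := by rw [← ha]; exact h
        rw [deriv_plateau_lt γ ρ h']
        simp only [hg_def, if_pos h.le]
        norm_num
      · have h' : ρ - 2 * γ < x := by rw [← ha]; exact h
        rw [deriv_plateau_gt γ ρ h']
        simp only [hg_def]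
        rw [if_neg (not_le.2 h), hc_def]
        ring
    rw [hstep, ← intervalIntegral.integral_add_adjacent_intervals (hgint 0 a) (hgint a ρ)]
    have h1 : (∫ x in (0:ℝ)..a, g x) = 0 := by
      rw [show (∫ x in (0:ℝ)..a, g x) = ∫ x in (0:ℝ)..a, (0:ℝ) from
        intervalIntegral.integral_congr fun x hx => by
          rw [Set.uIcc_of_le ha0.le] at hx
          simp [hg_def, hx.2]]
      simp
    have h2 : (∫ x in a..ρ, g x) = c * ((ρ ^ N - a ^ N) / N) := by
      have : (∫ x in a..ρ, g x) = ∫ x in a..ρ, c * x ^ (N - 1) := by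
        apply intervalIntegral.integral_congr_ae
        apply Filter.Eventually.of_forall
        intro x hx
        rw [Set.uIoc_of_le haρ.le] at hx
        simp [hg_def, not_le.2 hx.1]
      rw [this, intervalIntegral.integral_const_mul, integral_pow, hNN, hNcast]
    rw [h1, h2, zero_add]
  -- second integral
  have hcont2 : Continuous (fun r : ℝ => r ^ (N - 1) * F (plateau γ ρ r)) :=
    (continuous_pow (N - 1)).mul (hFcont.comp (plateau_cont γ ρ))
  have hI2a : (∫ r in (0:ℝ)..a, r ^ (N - 1) * F (plateau γ ρ r)) = F γ * (a ^ N / N) := by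
    have hcongr : (∫ r in (0:ℝ)..a, r ^ (N - 1) * F (plateau γ ρ r))
        = ∫ r in (0:ℝ)..a, r ^ (N - 1) * F γ := by
      apply intervalIntegral.integral_congr
      intro x hx
      rw [Set.uIcc_of_le ha0.le] at hx
      have hxa : x ≤ ρ - 2 * γ := by rw [← ha]; exact hx.2
      simp [plateau, if_pos hxa]
    rw [hcongr, intervalIntegral.integral_mul_const, integral_pow, hNN, hNcast]
    rw [zero_pow (by omega : N ≠ 0)]
    ring
  have hplateau_mem : ∀ r ∈ Set.Icc a ρ, plateau γ ρ r ∈ Set.Icc (0:ℝ) γ := by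
    intro r hr
    rw [plateau_eq_min]
    simp only [Set.mem_Icc]
    exact ⟨le_min hγ.le (by linarith [hr.2]), min_le_left _ _⟩
  have hI2b : (-M) * ((ρ ^ N - a ^ N) / N) ≤ ∫ r in a..ρ, r ^ (N - 1) * F (plateau γ ρ r) := by
    have hmono : (∫ r in a..ρ, (-M) * r ^ (N - 1))
        ≤ ∫ r in a..ρ, r ^ (N - 1) * F (plateau γ ρ r) := by
      apply intervalIntegral.integral_mono_on haρ.le
        ((continuous_const.mul (continuous_pow (N - 1))).intervalIntegrable a ρ)
        (hcont2.intervalIntegrable a ρ)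
      intro r hr
      have hr0 : (0:ℝ) ≤ r := le_trans ha0.le hr.1
      have hFb : -M ≤ F (plateau γ ρ r) := by
        have := hM _ (hplateau_mem r hr)
        rw [Real.norm_eq_abs] at this
        linarith [(abs_le.1 this).1]
      have hp : (0:ℝ) ≤ r ^ (N - 1) := pow_nonneg hr0 _
      show -M * r ^ (N - 1) ≤ r ^ (N - 1) * F (plateau γ ρ r)
      nlinarith [mul_nonneg hp (show (0:ℝ) ≤ F (plateau γ ρ r) + M by linarith)]
    have hcalc : (∫ r in a..ρ, (-M) * r ^ (N - 1)) = (-M) * ((ρ ^ N - a ^ N) / N) := by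
      rw [intervalIntegral.integral_const_mul, integral_pow, hNN, hNcast]
    rw [hcalc] at hmono
    exact hmono
  have hI2 : F γ * (a ^ N / N) + (-M) * ((ρ ^ N - a ^ N) / N)
      ≤ ∫ r in (0:ℝ)..ρ, r ^ (N - 1) * F (plateau γ ρ r) := by
    rw [← intervalIntegral.integral_add_adjacent_intervals
      (hcont2.intervalIntegrable 0 a) (hcont2.intervalIntegrable a ρ), hI2a]
    linarith
  -- key growth estimate
  have hX : (0:ℝ) ≤ ρ ^ N - a ^ N := by
    have := pow_le_pow_left₀ ha0.le haρ.le N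
    linarith
  have hlF : 0 < lam * F γ := mul_pos hlam hFγ
  have hρbig : 2 ^ (N + 1) * (1 + lam * M) * N * γ / (lam * F γ) < ρ :=
    lt_of_le_of_lt (le_max_right _ _) hρ
  have h5 : 2 ^ (N + 1) * (1 + lam * M) * N * γ < lam * F γ * ρ := by
    have h := (div_lt_iff₀ hlF).mp hρbig
    nlinarith
  have hgeom : ρ ^ N - a ^ N ≤ (N : ℝ) * ρ ^ (N - 1) * (2 * γ) := by
    have := pow_sub_pow_le_aux ha0.le haρ.le N
    have hsub : ρ - a = 2 * γ := by rw [ha]; ring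
    rw [hsub] at this
    exact this
  have hB : ρ ^ N / 2 ^ N ≤ a ^ N := by
    have h1 : ρ / 2 ≤ a := by rw [ha]; linarith
    calc ρ ^ N / 2 ^ N = (ρ / 2) ^ N := (div_pow ρ 2 N).symm
      _ ≤ a ^ N := pow_le_pow_left₀ (by positivity) h1 N
  have h1K : (0:ℝ) ≤ 1 + lam * M := by positivity
  have hρN : ρ * ρ ^ (N - 1) = ρ ^ N := by
    conv_rhs => rw [← hNN]
    rw [pow_succ]
    ring
  have h2Npos : (0:ℝ) < 2 ^ N := by positivity
  have hc2 : 2 ^ N * ((1 + lam * M) * ((N : ℝ) * ρ ^ (N - 1) * (2 * γ)))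
      < 2 ^ N * (lam * F γ * a ^ N) := by
    calc 2 ^ N * ((1 + lam * M) * ((N : ℝ) * ρ ^ (N - 1) * (2 * γ)))
        = (2 ^ (N + 1) * (1 + lam * M) * N * γ) * ρ ^ (N - 1) := by rw [pow_succ]; ring
      _ < (lam * F γ * ρ) * ρ ^ (N - 1) := mul_lt_mul_of_pos_right h5 (pow_pos hρ0 _)
      _ = lam * F γ * ρ ^ N := by rw [mul_assoc, hρN]
      _ ≤ 2 ^ N * (lam * F γ * a ^ N) := by
          have hmul := mul_le_mul_of_nonneg_left hB hlF.le
          have heq : lam * F γ * ρ ^ N = 2 ^ N * (lam * F γ * (ρ ^ N / 2 ^ N)) := by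
            field_simp
          rw [heq]
          exact mul_le_mul_of_nonneg_left hmul h2Npos.le
  have key : (1 + lam * M) * (ρ ^ N - a ^ N) < lam * F γ * a ^ N :=
    lt_of_le_of_lt (mul_le_mul_of_nonneg_left hgeom h1K) ((mul_lt_mul_iff_right₀ h2Npos).mp hc2)
  -- conclude
  rw [key1]
  have h1 : c * ((ρ ^ N - a ^ N) / N) ≤ (ρ ^ N - a ^ N) / N := by
    have h0 : (0:ℝ) ≤ (ρ ^ N - a ^ N) / N := div_nonneg hX hNpos.le
    calc c * ((ρ ^ N - a ^ N) / N) ≤ 1 * ((ρ ^ N - a ^ N) / N) :=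
          mul_le_mul_of_nonneg_right hc1 h0
      _ = (ρ ^ N - a ^ N) / N := one_mul _
  have h2 : lam * (F γ * (a ^ N / N) + (-M) * ((ρ ^ N - a ^ N) / N))
      ≤ lam * ∫ r in (0:ℝ)..ρ, r ^ (N - 1) * F (plateau γ ρ r) :=
    mul_le_mul_of_nonneg_left hI2 hlam.le
  have e2 : lam * (F γ * (a ^ N / N) + (-M) * ((ρ ^ N - a ^ N) / N))
      = lam * F γ * (a ^ N / N) - lam * M * ((ρ ^ N - a ^ N) / N) := by ring
  have hkey2 : (ρ ^ N - a ^ N) / N + lam * M * ((ρ ^ N - a ^ N) / N)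
      < lam * F γ * (a ^ N / N) := by
    calc (ρ ^ N - a ^ N) / N + lam * M * ((ρ ^ N - a ^ N) / N)
        = ((1 + lam * M) * (ρ ^ N - a ^ N)) / N := by ring
      _ < (lam * F γ * a ^ N) / N := by gcongr
      _ = lam * F γ * (a ^ N / N) := by ring
  rw [e2] at h2
  linarith only [h1, h2, hkey2]
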